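/- (Bounded Merzlyakov substitution) For every natural number n and every q, there exist elements M₁, …, M_q of the free group F₂ on two generators such that the homomorphism from F(a₁, a₂, b₁, …, b_q) to F₂ fixing a₁, a₂ and sending each bⱼ to Mⱼ is injective on all elements of word length at most n: every nontrivial element of length ≤ n maps to a nontrivial element. -/

import Mathlib

set_option linter.unusedSectionVars false

namespace BMS
open FreeGroup

section Gen
variable {α : Type*} [DecidableEq α]

/-- no-cancellation relation between adjacent letters -/
def NRrel (p q : α × Bool) : Prop := ¬(p.1 = q.1 ∧ p.2 = !q.2)

/-- a word is reduced -/
def NR (L : List (α × Bool)) : Prop := List.Chain' NRrel L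

theorem NR.reduce_eq {L : List (α × Bool)} (h : NR L) : reduce L = L := by
  induction L with
  | nil => rfl
  | cons x L ih =>
    have hL : NR L := h.tail
    rw [reduce.cons, ih hL]
    cases L with
    | nil => rfl
    | cons y t =>
      have hxy : NRrel x y := List.isChain_cons_cons.mp h |>.1
      simp only [NRrel] at hxy
      simp [if_neg hxy]

theorem nr_reduce (L : List (α × Bool)) : NR (reduce L) := by
  induction L with
  | nil => exact List.isChain_nil
  | cons x L ih =>
    rw [reduce.cons]
    rcases hr : reduce L with _ | ⟨hd, tl⟩
    · simp [NR, List.Chain']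
    · rw [hr] at ih
      show NR (if x.1 = hd.1 ∧ x.2 = !hd.2 then tl else x :: hd :: tl)
      by_cases hc : x.1 = hd.1 ∧ x.2 = !hd.2
      · rw [if_pos hc]; exact ih.tail
      · rw [if_neg hc]; exact List.isChain_cons_cons.mpr ⟨hc, ih⟩

theorem NR.toWord_mk {L : List (α × Bool)} (h : NR L) : (FreeGroup.mk L).toWord = L := by
  rw [FreeGroup.toWord_mk, h.reduce_eq]

theorem nr_toWord (x : FreeGroup α) : NR x.toWord := by
  rw [← FreeGroup.reduce_toWord]; exact nr_reduce _

theorem NR.append {A B : List (α × Bool)} (hA : NR A) (hB : NR B)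
    (h : ∀ a ∈ A.getLast?, ∀ b ∈ B.head?, NRrel a b) : NR (A ++ B) :=
  List.isChain_append.mpr ⟨hA, hB, h⟩

theorem toWord_mk_mul {A B : List (α × Bool)} (hA : NR A) (hB : NR B)
    (h : ∀ a ∈ A.getLast?, ∀ b ∈ B.head?, NRrel a b) :
    (FreeGroup.mk A * FreeGroup.mk B).toWord = A ++ B := by
  rw [FreeGroup.mul_mk]; exact (hA.append hB h).toWord_mk

theorem mk_replicate (n : ℕ) (x : α × Bool) :
    FreeGroup.mk (List.replicate n x) = (FreeGroup.mk [x]) ^ n := by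
  induction n with
  | zero => simp [FreeGroup.one_eq_mk]
  | succ n ih => rw [List.replicate_succ, pow_succ', ← ih, FreeGroup.mul_mk]; rfl

theorem invRev_append (A B : List (α × Bool)) :
    FreeGroup.invRev (A ++ B) = FreeGroup.invRev B ++ FreeGroup.invRev A := by
  simp [FreeGroup.invRev]

theorem invRev_replicate (n : ℕ) (x : α × Bool) :
    FreeGroup.invRev (List.replicate n x) = List.replicate n (x.1, !x.2) := by
  simp [FreeGroup.invRev, List.map_replicate, List.reverse_replicate]

end Gen

/-! ### specialization to `Fin 2` -/

/-- the generator `b` -/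
def bb : FreeGroup (Fin 2) := FreeGroup.of 1

/-- a `b`-run as an element -/
def bpow (e : ℤ) : FreeGroup (Fin 2) := bb ^ e

/-- an `a`-letter as an element -/
def aelt (s : Bool) : FreeGroup (Fin 2) := FreeGroup.mk [((0 : Fin 2), s)]

/-- a `b`-run as a list -/
def blist (e : ℤ) : List (Fin 2 × Bool) := List.replicate e.natAbs ((1 : Fin 2), decide (0 < e))

theorem mk_bsingle_true : FreeGroup.mk [((1 : Fin 2), true)] = bb := rfl

theorem mk_bsingle_false : FreeGroup.mk [((1 : Fin 2), false)] = bb⁻¹ := by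
  rw [bb, FreeGroup.of, FreeGroup.inv_mk]; rfl

theorem mk_blist (e : ℤ) : FreeGroup.mk (blist e) = bpow e := by
  rcases lt_trichotomy e 0 with he | rfl | he
  · obtain ⟨n, rfl⟩ : ∃ n : ℕ, e = -(n : ℤ) := ⟨e.natAbs, by omega⟩
    have h1 : ¬ ((0:ℤ) < -(n:ℤ)) := by omega
    rw [blist, decide_eq_false h1, Int.natAbs_neg, Int.natAbs_natCast, mk_replicate,
      mk_bsingle_false, inv_pow, ← zpow_natCast, ← zpow_neg, bpow]
  · simp [blist, bpow, FreeGroup.one_eq_mk]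
  · obtain ⟨n, rfl⟩ : ∃ n : ℕ, e = (n : ℤ) := ⟨e.natAbs, by omega⟩
    rw [blist, decide_eq_true he, Int.natAbs_natCast, mk_replicate, mk_bsingle_true, bpow,
      zpow_natCast]

theorem NR_blist (e : ℤ) : NR (blist e) := by
  apply List.isChain_replicate_of_rel
  simp [NRrel]

theorem blist_eq_nil_iff (e : ℤ) : blist e = [] ↔ e = 0 := by
  simp [blist, Int.natAbs_eq_zero]

end BMS

namespace BMS
open FreeGroup

/-- `g` is trivial or its reduced word starts with an `a`-letter -/
def AHd (g : FreeGroup (Fin 2)) : Prop := ∀ p ∈ g.toWord.head?, p.1 = 0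

/-- `g` is trivial or its reduced word starts with a `b`-letter -/
def BHd (g : FreeGroup (Fin 2)) : Prop := ∀ p ∈ g.toWord.head?, p.1 = 1

/-- `g` is trivial or its reduced word ends with an `a`-letter -/
def ATl (g : FreeGroup (Fin 2)) : Prop := ∀ p ∈ g.toWord.getLast?, p.1 = 0

theorem toWord_mul_of_nr {g h : FreeGroup (Fin 2)}
    (hseam : ∀ a ∈ g.toWord.getLast?, ∀ b ∈ h.toWord.head?, NRrel a b) :
    (g * h).toWord = g.toWord ++ h.toWord := by
  have := toWord_mk_mul (nr_toWord g) (nr_toWord h) hseam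
  rwa [FreeGroup.mk_toWord, FreeGroup.mk_toWord] at this

theorem toWord_bpow (e : ℤ) : (bpow e).toWord = blist e := by
  rw [← mk_blist]; exact (NR_blist e).toWord_mk

theorem blist_fst {e : ℤ} {p : Fin 2 × Bool} (h : p ∈ blist e) : p.1 = 1 := by
  have := List.eq_of_mem_replicate h
  rw [this]

/-- gluing a `b`-run on the left of an `a`-headed element -/
theorem toWord_bpow_mul {e : ℤ} {g : FreeGroup (Fin 2)} (hg : AHd g) :
    (bpow e * g).toWord = blist e ++ g.toWord := by
  rw [toWord_mul_of_nr, toWord_bpow]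
  intro p hp q hq
  have h1 : p.1 = 1 := by
    rw [toWord_bpow] at hp
    exact blist_fst (List.mem_of_mem_getLast? hp)
  have h2 : q.1 = 0 := hg q hq
  simp only [NRrel, h1, h2]
  rintro ⟨h, -⟩
  exact one_ne_zero h

theorem toWord_aelt (s : Bool) : (aelt s).toWord = [((0 : Fin 2), s)] :=
  NR.toWord_mk (List.isChain_singleton _)

/-- gluing an `a`-letter on the left of a `b`-headed element -/
theorem toWord_aelt_mul {s : Bool} {g : FreeGroup (Fin 2)} (hg : BHd g) :
    (aelt s * g).toWord = ((0 : Fin 2), s) :: g.toWord := by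
  rw [toWord_mul_of_nr, toWord_aelt]
  · rfl
  intro p hp q hq
  rw [toWord_aelt] at hp
  simp only [List.getLast?_singleton, Option.mem_some_iff] at hp
  have h2 : q.1 = 1 := hg q hq
  subst hp
  simp only [NRrel, h2]
  rintro ⟨h, -⟩
  exact zero_ne_one h

theorem blist_cons (s : Bool) (u' : ℤ) (hcomp : u' = 0 ∨ decide (0 < u') = s) :
    blist ((if s then 1 else -1) + u') = ((1 : Fin 2), s) :: blist u' := by
  have htail : List.replicate u'.natAbs ((1 : Fin 2), decide (0 < u'))
      = List.replicate u'.natAbs ((1 : Fin 2), s) := by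
    rcases hcomp with rfl | h
    · rfl
    · rw [h]
  cases s with
  | true =>
    have h0 : 0 ≤ u' := by
      rcases hcomp with rfl | h
      · exact le_refl 0
      · exact le_of_lt (of_decide_eq_true h)
    have hna : ((1 : ℤ) + u').natAbs = u'.natAbs + 1 := by omega
    have hd : decide ((0:ℤ) < 1 + u') = true := decide_eq_true (by omega)
    show blist (1 + u') = ((1 : Fin 2), true) :: blist u'
    rw [blist, hna, hd, List.replicate_succ, blist, htail]
  | false =>
    have h0 : u' ≤ 0 := by
      rcases hcomp with rfl | h
      · exact le_refl 0
      · have : ¬ (0 < u') := of_decide_eq_false h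
        omega
    have hna : ((-1 : ℤ) + u').natAbs = u'.natAbs + 1 := by omega
    have hd : decide ((0:ℤ) < -1 + u') = false := decide_eq_false (by omega)
    show blist (-1 + u') = ((1 : Fin 2), false) :: blist u'
    rw [blist, hna, hd, List.replicate_succ, blist, htail]

theorem bpow_add (e f : ℤ) : bpow (e + f) = bpow e * bpow f := zpow_add _ _ _

/-- front decomposition: split off the maximal leading `b`-run -/
theorem FD (g : FreeGroup (Fin 2)) : ∃ (u : ℤ) (h : FreeGroup (Fin 2)),
    g = bpow u * h ∧ AHd h ∧ g.toWord = blist u ++ h.toWord := by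
  suffices H : ∀ (W : List (Fin 2 × Bool)), NR W → ∃ u h, FreeGroup.mk W = bpow u * h ∧
      AHd h ∧ W = blist u ++ h.toWord by
    obtain ⟨u, h, h1, h2, h3⟩ := H g.toWord (nr_toWord g)
    rw [FreeGroup.mk_toWord] at h1
    exact ⟨u, h, h1, h2, h3⟩
  intro W
  induction W with
  | nil =>
    intro _
    refine ⟨0, 1, ?_, ?_, ?_⟩
    · rw [bpow, zpow_zero, mul_one, FreeGroup.one_eq_mk]
    · intro p hp; rw [FreeGroup.toWord_one] at hp; simp at hp
    · rw [FreeGroup.toWord_one, blist]; simp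
  | cons x W ih =>
    intro hNR
    obtain ⟨c, s⟩ := x
    by_cases hc : c = 0
    · subst hc
      refine ⟨0, FreeGroup.mk (((0 : Fin 2), s) :: W), ?_, ?_, ?_⟩
      · rw [bpow, zpow_zero, one_mul]
      · intro p hp
        rw [hNR.toWord_mk] at hp
        simp at hp
        rw [← hp]
      · rw [hNR.toWord_mk, blist]; simp
    · have hc1 : c = 1 := by
        have : c.val < 2 := c.2
        have h0 : c.val ≠ 0 := fun h => hc (Fin.ext h)
        exact Fin.ext (by omega)
      subst hc1
      obtain ⟨u', h', ih1, ih2, ih3⟩ := ih hNR.tail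
      have hcomp : u' = 0 ∨ decide (0 < u') = s := by
        by_cases hu : u' = 0
        · exact Or.inl hu
        · right
          have hbn : blist u' ≠ [] := fun h => hu ((blist_eq_nil_iff u').mp h)
          obtain ⟨t, ht⟩ := List.exists_cons_of_ne_nil hbn
          obtain ⟨t2, ht2⟩ := ht
          have hWhead : W.head? = some ((1 : Fin 2), decide (0 < u')) := by
            rw [ih3, ht2]
            have : t = ((1 : Fin 2), decide (0 < u')) := by
              have : t ∈ blist u' := by rw [ht2]; exact List.mem_cons_self
              have h2 := List.eq_of_mem_replicate this
              exact h2
            rw [this]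
            rfl
          have hrel : NRrel ((1 : Fin 2), s) ((1 : Fin 2), decide (0 < u')) := by
            rcases W with _ | ⟨w, W'⟩
            · simp at hWhead
            · have := List.isChain_cons_cons.mp hNR |>.1
              simp at hWhead
              rwa [← hWhead]
          simp only [NRrel, true_and] at hrel
          rcases Bool.eq_false_or_eq_true s with rfl | rfl
          · rcases Bool.eq_false_or_eq_true (decide (0 < u')) with h | h
            · exact h
            · rw [h] at hrel; simp at hrel
          · rcases Bool.eq_false_or_eq_true (decide (0 < u')) with h | h
            · rw [h] at hrel; simp at hrel
            · exact h
      refine ⟨(if s then 1 else -1) + u', h', ?_, ih2, ?_⟩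
      · rw [bpow_add, mul_assoc, ← ih1]
        have : FreeGroup.mk (((1:Fin 2), s) :: W) = FreeGroup.mk [((1:Fin 2), s)] * FreeGroup.mk W := by
          rw [FreeGroup.mul_mk]; rfl
        rw [this]
        congr 1
        cases s with
        | true => rw [mk_bsingle_true, bpow]; simp
        | false => rw [mk_bsingle_false, bpow]; simp
      · rw [blist_cons s u' hcomp, List.cons_append, ← ih3]

end BMS

namespace BMS
open FreeGroup

theorem blist_invRev (u : ℤ) : FreeGroup.invRev (blist u) = blist (-u) := by
  rw [blist, invRev_replicate, blist, Int.natAbs_neg]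
  rcases lt_trichotomy u 0 with h | rfl | h
  · have h1 : decide (0 < u) = false := decide_eq_false (by omega)
    have h2 : decide (0 < -u) = true := decide_eq_true (by omega)
    rw [h1, h2]
    rfl
  · simp
  · have h1 : decide (0 < u) = true := decide_eq_true (by omega)
    have h2 : decide (0 < -u) = false := decide_eq_false (by omega)
    rw [h1, h2]
    rfl

/-- tail decomposition: split off the maximal trailing `b`-run -/
theorem TD (g : FreeGroup (Fin 2)) : ∃ (h : FreeGroup (Fin 2)) (v : ℤ),
    g = h * bpow v ∧ ATl h ∧ g.toWord = h.toWord ++ blist v := by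
  obtain ⟨u, k, h1, h2, h3⟩ := FD g⁻¹
  have hg : g = k⁻¹ * bpow (-u) := by
    rw [← inv_inv g, h1, mul_inv_rev]
    congr 1
    rw [bpow, bpow, zpow_neg]
  refine ⟨k⁻¹, -u, hg, ?_, ?_⟩
  · intro p hp
    rw [FreeGroup.toWord_inv, FreeGroup.invRev, List.getLast?_reverse, List.head?_map] at hp
    obtain ⟨q, hq, hfq⟩ := Option.mem_map.mp hp
    have := h2 q hq
    rw [← hfq]
    exact this
  · have : g.toWord = FreeGroup.invRev (g⁻¹.toWord) := by
      rw [← FreeGroup.toWord_inv, inv_inv]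
    rw [this, h3, invRev_append, blist_invRev, ← FreeGroup.toWord_inv]

/-- the spine lemma: a short element, a long `b`-run, an `a`-letter, and a
`b`-headed tail glue into a non-trivial element -/
theorem spine (s g : FreeGroup (Fin 2)) (e : ℤ) (εb : Bool)
    (he : (s.toWord.length : ℤ) < |e|) (hg : BHd g) :
    (s * (bpow e * (aelt εb * g))).toWord ≠ [] ∧
    (AHd s → s ≠ 1 → AHd (s * (bpow e * (aelt εb * g)))) := by
  obtain ⟨s₁, v, hs, hs₁, hsw⟩ := TD s
  have hvlen : (v.natAbs : ℤ) ≤ s.toWord.length := by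
    rw [hsw, List.length_append, blist, List.length_replicate]
    omega
  have hve : v + e ≠ 0 := by
    rcases abs_cases e with ⟨h1, h2⟩ | ⟨h1, h2⟩ <;> omega
  have hg1 : (aelt εb * g).toWord = ((0 : Fin 2), εb) :: g.toWord := toWord_aelt_mul hg
  have hg1A : AHd (aelt εb * g) := by
    intro p hp
    rw [hg1] at hp
    simp at hp
    rw [← hp]
  have hg2 : (bpow (v + e) * (aelt εb * g)).toWord = blist (v + e) ++ ((0 : Fin 2), εb) :: g.toWord := by
    rw [toWord_bpow_mul hg1A, hg1]
  have hassoc : s * (bpow e * (aelt εb * g)) = s₁ * (bpow (v + e) * (aelt εb * g)) := by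
    rw [hs, bpow_add]
    group
  have hblne : blist (v + e) ≠ [] := fun h => hve ((blist_eq_nil_iff _).mp h)
  obtain ⟨bl0, bltl, hbl⟩ := List.exists_cons_of_ne_nil hblne
  have hbl0 : bl0.1 = 1 := blist_fst (hbl ▸ List.mem_cons_self)
  have hseam : ∀ a ∈ s₁.toWord.getLast?, ∀ b ∈ (bpow (v + e) * (aelt εb * g)).toWord.head?, NRrel a b := by
    intro a ha b hb
    have ha0 : a.1 = 0 := hs₁ a ha
    rw [hg2, hbl] at hb
    simp at hb
    rw [← hb]
    simp only [NRrel, ha0, hbl0]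
    rintro ⟨h, -⟩
    exact zero_ne_one h
  have hfin : (s * (bpow e * (aelt εb * g))).toWord
      = s₁.toWord ++ (blist (v + e) ++ ((0 : Fin 2), εb) :: g.toWord) := by
    rw [hassoc, toWord_mul_of_nr hseam, hg2]
  constructor
  · rw [hfin]
    simp
  · intro hA hne
    have hs₁ne : s₁ ≠ 1 := by
      rintro rfl
      rw [one_mul] at hs
      have : s.toWord = blist v := by rw [hsw, FreeGroup.toWord_one]; simp
      have hv0 : v = 0 := by
        by_contra hv
        have hbn : blist v ≠ [] := fun h => hv ((blist_eq_nil_iff _).mp h)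
        obtain ⟨c0, ctl, hc⟩ := List.exists_cons_of_ne_nil hbn
        have hc1 : c0.1 = 1 := blist_fst (hc ▸ List.mem_cons_self)
        have : c0.1 = 0 := by
          apply hA
          rw [this, hc]
          rfl
        rw [hc1] at this
        exact one_ne_zero this
      rw [hv0] at hs
      exact hne (by rw [hs, bpow, zpow_zero])
    have hs₁w : s₁.toWord ≠ [] := fun h => hs₁ne (FreeGroup.toWord_eq_nil_iff.mp h)
    obtain ⟨c0, ctl, hc⟩ := List.exists_cons_of_ne_nil hs₁w
    intro p hp
    rw [hfin, hc] at hp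
    simp at hp
    rw [← hp]
    apply hA
    rw [hsw, hc]
    rfl

end BMS

namespace BMS
open FreeGroup

theorem bpow_mul_bpow_mul (I t : ℤ) (w : FreeGroup (Fin 2)) :
    bpow I * (bpow t * w) = bpow (I + t) * w := by
  rw [bpow_add, mul_assoc]

theorem BHd_of_toWord_blist_append {g : FreeGroup (Fin 2)} {e : ℤ} {T : List (Fin 2 × Bool)}
    (he : e ≠ 0) (h : g.toWord = blist e ++ T) : BHd g ∧ g ≠ 1 := by
  have hblne : blist e ≠ [] := fun hh => he ((blist_eq_nil_iff _).mp hh)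
  obtain ⟨c0, ctl, hc⟩ := List.exists_cons_of_ne_nil hblne
  have hc1 : c0.1 = 1 := blist_fst (hc ▸ List.mem_cons_self)
  constructor
  · intro p hp
    rw [h, hc] at hp
    simp at hp
    rw [← hp]
    exact hc1
  · intro h1
    rw [h1, FreeGroup.toWord_one] at h
    rw [hc] at h
    simp at h

/-- Variant A of the prefix lemma: big `b`-run times a short element -/
theorem bprefixA (u : FreeGroup (Fin 2)) (I : ℤ) (hI : (u.toWord.length : ℤ) < |I|) :
    BHd (bpow I * u) ∧ bpow I * u ≠ 1 := by
  obtain ⟨t, u', hu, hu', huw⟩ := FD u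
  have htlen : (t.natAbs : ℤ) ≤ u.toWord.length := by
    rw [huw, List.length_append, blist, List.length_replicate]
    omega
  have hIt : I + t ≠ 0 := by
    rcases abs_cases I with ⟨h1, h2⟩ | ⟨h1, h2⟩ <;> omega
  have key : (bpow I * u).toWord = blist (I + t) ++ u'.toWord := by
    rw [hu, bpow_mul_bpow_mul, toWord_bpow_mul hu']
  exact BHd_of_toWord_blist_append hIt key

/-- The main prefix lemma: big `b`-run, short element, big `b`-run, `a`-letter, good tail -/
theorem bprefixB (u g : FreeGroup (Fin 2)) (I e : ℤ) (εb : Bool)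
    (hI : (u.toWord.length : ℤ) < |I|) (he : (u.toWord.length : ℤ) < |e|)
    (hann : ∀ t : ℤ, u = bpow t → I + t + e ≠ 0) (hg : BHd g) :
    BHd (bpow I * (u * (bpow e * (aelt εb * g)))) ∧
      bpow I * (u * (bpow e * (aelt εb * g))) ≠ 1 := by
  obtain ⟨t, u', hu, hu', huw⟩ := FD u
  have htlen : (t.natAbs : ℤ) ≤ u.toWord.length := by
    rw [huw, List.length_append, blist, List.length_replicate]
    omega
  by_cases hone : u' = 1
  · -- u is a pure b-run
    subst hone
    rw [mul_one] at hu
    have hIte : I + t + e ≠ 0 := hann t hu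
    have hg1 : (aelt εb * g).toWord = ((0 : Fin 2), εb) :: g.toWord := toWord_aelt_mul hg
    have hg1A : AHd (aelt εb * g) := by
      intro p hp
      rw [hg1] at hp
      simp at hp
      rw [← hp]
    have key : (bpow I * (u * (bpow e * (aelt εb * g)))).toWord
        = blist (I + t + e) ++ ((0 : Fin 2), εb) :: g.toWord := by
      rw [hu, bpow_mul_bpow_mul, bpow_mul_bpow_mul, toWord_bpow_mul hg1A, hg1]
    exact BHd_of_toWord_blist_append hIte key
  · -- u has an a-letter
    have hu'len : (u'.toWord.length : ℤ) ≤ u.toWord.length := by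
      rw [huw, List.length_append]
      omega
    have hsp := spine u' g e εb (by omega) hg
    have hAH : AHd (u' * (bpow e * (aelt εb * g))) := hsp.2 hu' hone
    have hIt : I + t ≠ 0 := by
      rcases abs_cases I with ⟨h1, h2⟩ | ⟨h1, h2⟩ <;> omega
    have key : (bpow I * (u * (bpow e * (aelt εb * g)))).toWord
        = blist (I + t) ++ (u' * (bpow e * (aelt εb * g))).toWord := by
      rw [hu, mul_assoc, bpow_mul_bpow_mul, toWord_bpow_mul hAH]
    exact BHd_of_toWord_blist_append hIt key

end BMS

namespace BMS
open FreeGroup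

section Main

variable (n q : ℕ)

/-- block sizes -/
def Lb (j : Fin q) : ℤ := ((2 * (j : ℕ) + 2) * (n + 1) : ℕ)

def Rb (j : Fin q) : ℤ := ((2 * (j : ℕ) + 3) * (n + 1) : ℕ)

/-- the front block of `X_j^{±1}` -/
def Blk (j : Fin q) (s : Bool) : ℤ := if s then Lb n q j else -(Rb n q j)

/-- the inner block of `X_j^{±1}` -/
def Inn (j : Fin q) (s : Bool) : ℤ := if s then Rb n q j else -(Lb n q j)

/-- the Merzlyakov words -/
def Xw (j : Fin q) : FreeGroup (Fin 2) :=
  bpow (Blk n q j true) * (aelt true * bpow (Inn n q j true))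

/-- images of the generators -/
def fgen : Fin (2 + q) → FreeGroup (Fin 2) :=
  Fin.addCases (fun i => FreeGroup.of i) (fun j => Xw n q j)

/-- the substitution homomorphism -/
def phi : FreeGroup (Fin (2 + q)) →* FreeGroup (Fin 2) := FreeGroup.lift (fgen n q)

theorem phi_castAdd (i : Fin 2) : phi n q (FreeGroup.of (Fin.castAdd q i)) = FreeGroup.of i := by
  rw [phi, FreeGroup.lift_apply_of, fgen, Fin.addCases_left]

theorem phi_natAdd (j : Fin q) : phi n q (FreeGroup.of (Fin.natAdd 2 j)) = Xw n q j := by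
  rw [phi, FreeGroup.lift_apply_of, fgen, Fin.addCases_right]

theorem aelt_false : aelt false = (aelt true)⁻¹ := by
  rw [aelt, aelt, FreeGroup.inv_mk]; rfl

theorem bpow_neg (e : ℤ) : bpow (-e) = (bpow e)⁻¹ := by
  rw [bpow, bpow, zpow_neg]

theorem phi_bletter (j : Fin q) (s : Bool) :
    phi n q (FreeGroup.mk [(Fin.natAdd 2 j, s)]) =
      bpow (Blk n q j s) * (aelt s * bpow (Inn n q j s)) := by
  cases s with
  | true => exact phi_natAdd n q j
  | false =>
    have h1 : FreeGroup.mk [(Fin.natAdd 2 j, false)] = (FreeGroup.of (Fin.natAdd 2 j))⁻¹ := by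
      rw [FreeGroup.of, FreeGroup.inv_mk]; rfl
    rw [h1, _root_.map_inv, phi_natAdd, Xw]
    rw [show Blk n q j false = -(Inn n q j true) from rfl,
      show Inn n q j false = -(Blk n q j true) from rfl, aelt_false, bpow_neg, bpow_neg]
    group

theorem mk_cons {α : Type*} (x : α × Bool) (L : List (α × Bool)) :
    FreeGroup.mk (x :: L) = FreeGroup.mk [x] * FreeGroup.mk L := by
  rw [FreeGroup.mul_mk]; rfl

theorem phi_cons (x : Fin (2 + q) × Bool) (L : List (Fin (2 + q) × Bool)) :
    phi n q (FreeGroup.mk (x :: L)) = phi n q (FreeGroup.mk [x]) * phi n q (FreeGroup.mk L) := by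
  rw [mk_cons, _root_.map_mul]

/-- short letters -/
def Short (L : List (Fin (2 + q) × Bool)) : Prop := ∀ x ∈ L, (x.1 : ℕ) < 2

/-- embedding of short letters -/
def embP (x : Fin (2 + q) × Bool) : Fin 2 × Bool := (⟨x.1.1 % 2, Nat.mod_lt _ (by omega)⟩, x.2)

def embW (L : List (Fin (2 + q) × Bool)) : List (Fin 2 × Bool) := L.map (embP q)

theorem embW_nil : embW q [] = [] := rfl

theorem embW_cons (x : Fin (2 + q) × Bool) (L) :
    embW q (x :: L) = embP q x :: embW q L := rfl

theorem embW_length (L) : (embW q L).length = L.length := List.length_map _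

theorem phi_short_letter {x : Fin (2 + q) × Bool} (hx : (x.1 : ℕ) < 2) :
    phi n q (FreeGroup.mk [x]) = FreeGroup.mk [embP q x] := by
  obtain ⟨c, s⟩ := x
  simp only at hx
  have hc : c = Fin.castAdd q ⟨(c : ℕ), hx⟩ := Fin.ext rfl
  have hemb : embP q (c, s) = (⟨(c : ℕ), hx⟩, s) := by
    simp only [embP]
    congr 1
    exact Fin.ext (Nat.mod_eq_of_lt hx)
  cases s with
  | true =>
    rw [hemb]
    show phi n q (FreeGroup.of c) = FreeGroup.of _
    conv_lhs => rw [hc]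
    rw [phi_castAdd]
  | false =>
    have h1 : FreeGroup.mk [(c, false)] = (FreeGroup.of c)⁻¹ := by
      rw [FreeGroup.of, FreeGroup.inv_mk]; rfl
    have h2 : FreeGroup.mk [embP q (c, false)] = (FreeGroup.of (⟨(c : ℕ), hx⟩ : Fin 2))⁻¹ := by
      rw [hemb, FreeGroup.of, FreeGroup.inv_mk]; rfl
    rw [h1, h2, _root_.map_inv]
    conv_lhs => rw [hc]
    rw [phi_castAdd]

theorem phi_short {L : List (Fin (2 + q) × Bool)} (hL : Short q L) :
    phi n q (FreeGroup.mk L) = FreeGroup.mk (embW q L) := by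
  induction L with
  | nil =>
    rw [embW_nil, ← FreeGroup.one_eq_mk (α := Fin (2+q)), ← FreeGroup.one_eq_mk (α := Fin 2),
      _root_.map_one]
  | cons x L ih =>
    rw [phi_cons, ih (fun y hy => hL y (List.mem_cons_of_mem _ hy)),
      phi_short_letter n q (hL x (List.mem_cons_self)), embW_cons,
      mk_cons (embP q x) (embW q L)]

theorem NR_embW {L : List (Fin (2 + q) × Bool)} (hS : Short q L) (hNR : NR L) :
    NR (embW q L) := by
  induction L with
  | nil => exact List.isChain_nil
  | cons x L ih =>
    cases L with
    | nil => exact List.isChain_singleton _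
    | cons y L' =>
      rw [embW_cons, embW_cons]
      apply List.isChain_cons_cons.mpr
      constructor
      · have hrel : NRrel x y := (List.isChain_cons_cons.mp hNR).1
        have hx2 : (x.1 : ℕ) < 2 := hS x (List.mem_cons_self)
        have hy2 : (y.1 : ℕ) < 2 := hS y (List.mem_cons_of_mem _ (List.mem_cons_self))
        simp only [NRrel, embP] at hrel ⊢
        rintro ⟨h1, h2⟩
        apply hrel
        refine ⟨?_, h2⟩
        apply Fin.ext
        have := congrArg Fin.val h1
        simpa [Nat.mod_eq_of_lt hx2, Nat.mod_eq_of_lt hy2] using this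
      · have := ih (fun z hz => hS z (List.mem_cons_of_mem _ hz)) hNR.tail
        rwa [embW_cons] at this

end Main
end BMS

namespace BMS
open FreeGroup

section Main2
variable (n q : ℕ)

theorem lt_abs_of_natAbs {k : ℕ} {e : ℤ} (h : k < e.natAbs) : (k : ℤ) < |e| := by
  rw [Int.abs_eq_natAbs]
  exact_mod_cast h

theorem Blk_true (j : Fin q) : Blk n q j true = Lb n q j := rfl
theorem Blk_false (j : Fin q) : Blk n q j false = -(Rb n q j) := rfl
theorem Inn_true (j : Fin q) : Inn n q j true = Rb n q j := rfl
theorem Inn_false (j : Fin q) : Inn n q j false = -(Lb n q j) := rfl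

theorem natAbs_Blk (j : Fin q) (s : Bool) :
    (Blk n q j s).natAbs = (if s then 2 * (j : ℕ) + 2 else 2 * (j : ℕ) + 3) * (n + 1) := by
  cases s with
  | true => rw [Blk_true, if_pos rfl]; simp only [Lb, Int.natAbs_natCast]
  | false =>
    rw [Blk_false, if_neg Bool.false_ne_true]
    simp only [Rb, Int.natAbs_neg, Int.natAbs_natCast]

theorem natAbs_Inn (j : Fin q) (s : Bool) :
    (Inn n q j s).natAbs = (if s then 2 * (j : ℕ) + 3 else 2 * (j : ℕ) + 2) * (n + 1) := by
  cases s with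
  | true => rw [Inn_true, if_pos rfl]; simp only [Rb, Int.natAbs_natCast]
  | false =>
    rw [Inn_false, if_neg Bool.false_ne_true]
    simp only [Lb, Int.natAbs_neg, Int.natAbs_natCast]

theorem n_lt_natAbs_Blk (j : Fin q) (s : Bool) : n < (Blk n q j s).natAbs := by
  rw [natAbs_Blk]
  have h : 1 * (n + 1) ≤ (if s then 2 * (j : ℕ) + 2 else 2 * (j : ℕ) + 3) * (n + 1) :=
    Nat.mul_le_mul_right _ (by cases s <;> simp)
  omega

theorem n_lt_natAbs_Inn (j : Fin q) (s : Bool) : n < (Inn n q j s).natAbs := by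
  rw [natAbs_Inn]
  have h : 1 * (n + 1) ≤ (if s then 2 * (j : ℕ) + 3 else 2 * (j : ℕ) + 2) * (n + 1) :=
    Nat.mul_le_mul_right _ (by cases s <;> simp)
  omega

theorem mul_gap {a b c : ℕ} (h : a + 2 ≤ b) : a * c + 2 * c ≤ b * c := by
  have := Nat.mul_le_mul_right c h
  rw [add_mul] at this
  exact this

/-- the key annihilation-exclusion arithmetic -/
theorem hann_core (j' j : Fin q) (s εb : Bool) (t : ℤ) (ht : t.natAbs ≤ n)
    (hexc : ¬(t = 0 ∧ (j' : ℕ) = (j : ℕ) ∧ s = !εb)) :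
    Inn n q j' s + t + Blk n q j εb ≠ 0 := by
  rcases Bool.eq_false_or_eq_true s with rfl | rfl <;>
    rcases Bool.eq_false_or_eq_true εb with rfl | rfl
  · -- s = true, εb = true
    rw [Inn_true, Blk_true]
    simp only [Lb, Rb]
    have h1 : 1 * (n + 1) ≤ (2 * (j' : ℕ) + 3) * (n + 1) := Nat.mul_le_mul_right _ (by omega)
    have h2 : 1 * (n + 1) ≤ (2 * (j : ℕ) + 2) * (n + 1) := Nat.mul_le_mul_right _ (by omega)
    omega

  · -- s = true, εb = false : difference case
    rw [Inn_true, Blk_false]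
    simp only [Rb]
    by_cases hjj : (j' : ℕ) = (j : ℕ)
    · have ht0 : t ≠ 0 := fun h => hexc ⟨h, hjj, rfl⟩
      rw [hjj]
      omega
    · rcases Nat.lt_or_ge (j' : ℕ) (j : ℕ) with hlt | hge
      · have := mul_gap (a := 2 * (j' : ℕ) + 3) (b := 2 * (j : ℕ) + 3) (c := n + 1) (by omega)
        omega
      · have hlt : (j : ℕ) < (j' : ℕ) := by omega
        have := mul_gap (a := 2 * (j : ℕ) + 3) (b := 2 * (j' : ℕ) + 3) (c := n + 1) (by omega)
        omega
  · -- s = false, εb = true : difference case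
    rw [Inn_false, Blk_true]
    simp only [Lb]
    by_cases hjj : (j' : ℕ) = (j : ℕ)
    · have ht0 : t ≠ 0 := fun h => hexc ⟨h, hjj, rfl⟩
      rw [hjj]
      omega
    · rcases Nat.lt_or_ge (j' : ℕ) (j : ℕ) with hlt | hge
      · have := mul_gap (a := 2 * (j' : ℕ) + 2) (b := 2 * (j : ℕ) + 2) (c := n + 1) (by omega)
        omega
      · have hlt : (j : ℕ) < (j' : ℕ) := by omega
        have := mul_gap (a := 2 * (j : ℕ) + 2) (b := 2 * (j' : ℕ) + 2) (c := n + 1) (by omega)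
        omega
  · -- s = false, εb = false
    rw [Inn_false, Blk_false]
    simp only [Lb, Rb]
    have h1 : 1 * (n + 1) ≤ (2 * (j' : ℕ) + 2) * (n + 1) := Nat.mul_le_mul_right _ (by omega)
    have h2 : 1 * (n + 1) ≤ (2 * (j : ℕ) + 3) * (n + 1) := Nat.mul_le_mul_right _ (by omega)
    omega
/-- classification of letters -/
theorem letter_cases (c : Fin (2 + q)) :
    ((c : ℕ) < 2) ∨ (∃ j : Fin q, c = Fin.natAdd 2 j) := by
  by_cases h : (c : ℕ) < 2
  · exact Or.inl h
  · right
    have hq : (c : ℕ) - 2 < q := by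
      have := c.2
      omega
    exact ⟨⟨(c : ℕ) - 2, hq⟩, Fin.ext (by simp [Fin.natAdd]; omega)⟩

/-- The invariant -/
def Inv (L : List (Fin (2 + q) × Bool)) : Prop :=
  (Short q L ∧ phi n q (FreeGroup.mk L) = FreeGroup.mk (embW q L)) ∨
  (∃ (s₀ : List (Fin (2 + q) × Bool)) (j : Fin q) (εb : Bool)
      (rest : List (Fin (2 + q) × Bool)) (g : FreeGroup (Fin 2)),
    L = s₀ ++ (Fin.natAdd 2 j, εb) :: rest ∧ Short q s₀ ∧ BHd g ∧
    phi n q (FreeGroup.mk L) =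
      FreeGroup.mk (embW q s₀) * (bpow (Blk n q j εb) * (aelt εb * g)))

end Main2
end BMS

namespace BMS
open FreeGroup

section Main3
variable (n q : ℕ)

theorem inv_main (L : List (Fin (2 + q) × Bool)) (hNR : NR L) (hlen : L.length ≤ n) :
    Inv n q L := by
  induction L with
  | nil =>
    left
    have hS : Short q ([] : List (Fin (2 + q) × Bool)) :=
      fun x hx => absurd hx (List.not_mem_nil)
    exact ⟨hS, phi_short n q hS⟩
  | cons x L ih =>
    have hNRL : NR L := hNR.tail
    have hlenL : L.length ≤ n := by
      simp only [List.length_cons] at hlen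
      omega
    have hInv := ih hNRL hlenL
    obtain ⟨c, sx⟩ := x
    rcases letter_cases q c with hc | ⟨j', rfl⟩
    · -- short letter
      rcases hInv with ⟨hS, -⟩ | ⟨s₀, j, εb, rest, g, hLdec, hS0, hg, hid⟩
      · left
        have hS' : Short q ((c, sx) :: L) := by
          intro y hy
          rcases List.mem_cons.mp hy with rfl | hy
          · exact hc
          · exact hS y hy
        exact ⟨hS', phi_short n q hS'⟩
      · right
        refine ⟨(c, sx) :: s₀, j, εb, rest, g, by rw [hLdec]; rfl, ?_, hg, ?_⟩
        · intro y hy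
          rcases List.mem_cons.mp hy with rfl | hy
          · exact hc
          · exact hS0 y hy
        · rw [phi_cons, hid, phi_short_letter n q hc, ← mul_assoc, embW_cons,
            mk_cons (embP q (c, sx)) (embW q s₀)]
    · -- b-type letter
      rcases hInv with ⟨hS, hid⟩ | ⟨s₀, j, εb, rest, g, hLdec, hS0, hg, hid⟩
      · -- tail is short
        have hu : (phi n q (FreeGroup.mk L)).toWord = embW q L := by
          rw [hid, (NR_embW q hS hNRL).toWord_mk]
        have hlenu : ((phi n q (FreeGroup.mk L)).toWord.length : ℤ) < |Inn n q j' sx| := by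
          apply lt_abs_of_natAbs
          rw [hu, embW_length]
          have := n_lt_natAbs_Inn n q j' sx
          omega
        obtain ⟨hB, -⟩ := bprefixA (phi n q (FreeGroup.mk L)) (Inn n q j' sx) hlenu
        right
        refine ⟨[], j', sx, L, bpow (Inn n q j' sx) * phi n q (FreeGroup.mk L), rfl,
          fun y hy => absurd hy (List.not_mem_nil), hB, ?_⟩
        rw [phi_cons, phi_bletter n q j' sx, embW_nil, ← FreeGroup.one_eq_mk (α := Fin 2),
          one_mul, mul_assoc, mul_assoc]
      · -- tail has a b-letter
        have hinf : s₀ <:+: L := ⟨[], (Fin.natAdd 2 j, εb) :: rest, by rw [hLdec]; rfl⟩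
        have hNRs₀ : NR s₀ := List.IsChain.infix hNRL hinf
        have hu : (FreeGroup.mk (embW q s₀)).toWord = embW q s₀ :=
          (NR_embW q hS0 hNRs₀).toWord_mk
        have hlens₀ : s₀.length ≤ n := by
          have : L.length = s₀.length + 1 + rest.length := by
            rw [hLdec]
            simp [List.length_append]
            omega
          omega
        have hI : ((FreeGroup.mk (embW q s₀)).toWord.length : ℤ) < |Inn n q j' sx| := by
          apply lt_abs_of_natAbs
          rw [hu, embW_length]
          have := n_lt_natAbs_Inn n q j' sx
          omega
        have he : ((FreeGroup.mk (embW q s₀)).toWord.length : ℤ) < |Blk n q j εb| := by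
          apply lt_abs_of_natAbs
          rw [hu, embW_length]
          have := n_lt_natAbs_Blk n q j εb
          omega
        have hann : ∀ t : ℤ, FreeGroup.mk (embW q s₀) = bpow t →
            Inn n q j' sx + t + Blk n q j εb ≠ 0 := by
          intro t htEq
          have hblist : embW q s₀ = blist t := by rw [← hu, htEq, toWord_bpow]
          have hlent : t.natAbs ≤ n := by
            have hl := congrArg List.length hblist
            rw [embW_length, blist, List.length_replicate] at hl
            omega
          apply hann_core n q j' j sx εb t hlent
          rintro ⟨rfl, hjj, hsb⟩
          have hs₀nil : s₀ = [] := by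
            have hWnil : embW q s₀ = [] := by
              rw [hblist]
              simp [blist]
            exact List.map_eq_nil_iff.mp hWnil
          rw [hs₀nil] at hLdec
          have hadj : NRrel (Fin.natAdd 2 j', sx) (Fin.natAdd 2 j, εb) := by
            have h2 := hNR
            rw [hLdec] at h2
            exact (List.isChain_cons_cons.mp h2).1
          apply hadj
          refine ⟨?_, hsb⟩
          apply Fin.ext
          simp only [Fin.natAdd]
          omega
        obtain ⟨hB, -⟩ := bprefixB (FreeGroup.mk (embW q s₀)) g (Inn n q j' sx)
          (Blk n q j εb) εb hI he hann hg
        right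
        refine ⟨[], j', sx, L,
          bpow (Inn n q j' sx) *
            (FreeGroup.mk (embW q s₀) * (bpow (Blk n q j εb) * (aelt εb * g))), rfl,
          fun y hy => absurd hy (List.not_mem_nil), hB, ?_⟩
        rw [phi_cons, phi_bletter n q j' sx, hid, embW_nil,
          ← FreeGroup.one_eq_mk (α := Fin 2), one_mul, mul_assoc, mul_assoc]

theorem inv_ne_one (L : List (Fin (2 + q) × Bool)) (hNR : NR L) (hne : L ≠ [])
    (hlen : L.length ≤ n) (h : Inv n q L) : phi n q (FreeGroup.mk L) ≠ 1 := by
  rcases h with ⟨hS, hid⟩ | ⟨s₀, j, εb, rest, g, hLdec, hS0, hg, hid⟩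
  · rw [hid]
    intro h1
    have hWnil : embW q L = [] := by
      rw [← (NR_embW q hS hNR).toWord_mk, h1, FreeGroup.toWord_one]
    exact hne (List.map_eq_nil_iff.mp hWnil)
  · rw [hid]
    have hinf : s₀ <:+: L := ⟨[], (Fin.natAdd 2 j, εb) :: rest, by rw [hLdec]; rfl⟩
    have hNRs₀ : NR s₀ := List.IsChain.infix hNR hinf
    have hu : (FreeGroup.mk (embW q s₀)).toWord = embW q s₀ :=
      (NR_embW q hS0 hNRs₀).toWord_mk
    have hlens₀ : s₀.length ≤ n := by
      have h2 : L.length = s₀.length + 1 + rest.length := by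
        rw [hLdec]
        simp [List.length_append]
        omega
      omega
    have he : ((FreeGroup.mk (embW q s₀)).toWord.length : ℤ) < |Blk n q j εb| := by
      apply lt_abs_of_natAbs
      rw [hu, embW_length]
      have := n_lt_natAbs_Blk n q j εb
      omega
    have hsp := (spine (FreeGroup.mk (embW q s₀)) g (Blk n q j εb) εb he hg).1
    intro h1
    apply hsp
    rw [h1, FreeGroup.toWord_one]

end Main3
end BMS

theorem bounded_merzlyakov_substitution (n q : ℕ) :
    ∃ (M : Fin q → FreeGroup (Fin 2)) (φ : FreeGroup (Fin (2 + q)) →* FreeGroup (Fin 2)),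
      (∀ i : Fin 2, φ (FreeGroup.of (Fin.castAdd q i)) = FreeGroup.of i) ∧
      (∀ j : Fin q, φ (FreeGroup.of (Fin.natAdd 2 j)) = M j) ∧
      (∀ w : FreeGroup (Fin (2 + q)), w ≠ 1 → (FreeGroup.toWord w).length ≤ n → φ w ≠ 1) := by
  refine ⟨fun j => BMS.Xw n q j, BMS.phi n q, BMS.phi_castAdd n q, BMS.phi_natAdd n q, ?_⟩
  intro w hw hlen
  have hNR := BMS.nr_toWord w
  have hne : w.toWord ≠ [] := fun h => hw (FreeGroup.toWord_eq_nil_iff.mp h)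
  have hInv := BMS.inv_main n q w.toWord hNR hlen
  have hfin := BMS.inv_ne_one n q w.toWord hNR hne hlen hInv
  rwa [FreeGroup.mk_toWord] at hfin
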